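/- In the tree reduced instance: if there exists W ⊆ V \ {z*_1} such that candidate c uniquely wins the election restricted to W, then there exists A ⊆ {1, …, m} with |A| = ℓ and ⋃_{i ∈ A} S_i = {1, …, 3ℓ}. -/
import Mathlib


/-- Vertices of the tree reduced instance: for each `i ∈ [m]`, the path `P^(i)` has
vertices `v i j` (`j : Fin 3`, the vertices `v^(i)_1, v^(i)_2, v^(i)_3`), `u i k`
(`k : Fin (3ℓ)`, the vertices `u^(i)_1, …, u^(i)_{3ℓ}`) and `w i`; the path `P^#` has
vertices `zh 0, zh 1`; the path `P^*` has vertices `zs t` for `t : Fin (m + 1 - ℓ)`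
(all 0-indexed). -/
inductive VT (ℓ m : ℕ) : Type
  | v (i : Fin m) (j : Fin 3) : VT ℓ m
  | u (i : Fin m) (k : Fin (3 * ℓ)) : VT ℓ m
  | w (i : Fin m) : VT ℓ m
  | zh (j : Fin 2) : VT ℓ m
  | zs (t : Fin (m + 1 - ℓ)) : VT ℓ m
  deriving DecidableEq

/-- The candidate set `C = U ∪ {c, d}`, where `U = {1, …, 3ℓ}`. -/
inductive CandT (ℓ : ℕ) : Type
  | elem (k : Fin (3 * ℓ)) : CandT ℓ
  | c : CandT ℓ
  | d : CandT ℓ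
  deriving DecidableEq

/-- Base edge relation of the tree reduced instance: consecutive vertices of each path
`P^(i) = (v^(i)_1, v^(i)_2, v^(i)_3, u^(i)_1, …, u^(i)_{3ℓ}, w^(i))`, of
`P^# = (z#_1, z#_2)` and of `P^* = (z*_1, …, z*_{m+1−ℓ})` are adjacent, and the last
vertex `z*_{m+1−ℓ}` of `P^*` is joined to each head `v^(i)_1` and to `z#_1`. -/
def baseRelT (ℓ m : ℕ) : VT ℓ m → VT ℓ m → Prop
  | .v i j, .v i' j' => i = i' ∧ (j : ℕ) + 1 = (j' : ℕ)
  | .v i j, .u i' k => i = i' ∧ (j : ℕ) = 2 ∧ (k : ℕ) = 0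
  | .u i k, .u i' k' => i = i' ∧ (k : ℕ) + 1 = (k' : ℕ)
  | .u i k, .w i' => i = i' ∧ (k : ℕ) + 1 = 3 * ℓ
  | .zh j, .zh j' => (j : ℕ) + 1 = (j' : ℕ)
  | .zs t, .zs t' => (t : ℕ) + 1 = (t' : ℕ)
  | .zs t, .v _ j => (t : ℕ) + 1 = m + 1 - ℓ ∧ (j : ℕ) = 0
  | .zs t, .zh j => (t : ℕ) + 1 = m + 1 - ℓ ∧ (j : ℕ) = 0
  | _, _ => False

/-- The tree of the tree reduced instance. -/
def GT (ℓ m : ℕ) : SimpleGraph (VT ℓ m) := SimpleGraph.fromRel (baseRelT ℓ m)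

/-- The voting function, given an enumeration `e i 0, e i 1, e i 2` of the elements of
each set `S_i`: `v^(i)_j` votes for `e^(i)_j`, `u^(i)_k` votes for `k`, the `w^(i)` and
`z#`'s vote for `c`, and the `z*`'s vote for `d`. -/
def τT (ℓ m : ℕ) (e : Fin m → Fin 3 → Fin (3 * ℓ)) : VT ℓ m → CandT ℓ
  | .v i j => CandT.elem (e i j)
  | .u _ k => CandT.elem k
  | .w _ => CandT.c
  | .zh _ => CandT.c
  | .zs _ => CandT.d

/-- The set `S_i`, recovered from the enumeration of its elements. -/
def SetT (ℓ m : ℕ) (e : Fin m → Fin 3 → Fin (3 * ℓ)) (i : Fin m) :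
    Finset (Fin (3 * ℓ)) :=
  Finset.image (e i) Finset.univ

/-- The distinguished vertex `x = z*_1`. -/
def xT (ℓ m : ℕ) (h : 0 < m + 1 - ℓ) : VT ℓ m := VT.zs ⟨0, h⟩

/-- `HW G W x`: the set of vertices reachable from `x` in the subgraph of `G` induced on
the complement of `W` (each step of a connecting walk must avoid `W`). -/
def HW {V : Type*} (G : SimpleGraph V) (W : Set V) (x : V) : Set V :=
  {z | Relation.ReflTransGen (fun a b => G.Adj a b ∧ a ∉ W ∧ b ∉ W) x z}

/-- Candidate `c` uniquely wins the election restricted to `W`: every other candidate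
gets strictly fewer votes among the voters of `H_W`. -/
def winsT (ℓ m : ℕ) (e : Fin m → Fin 3 → Fin (3 * ℓ)) (x : VT ℓ m)
    (W : Set (VT ℓ m)) : Prop :=
  ∀ y : CandT ℓ, y ≠ CandT.c →
    (HW (GT ℓ m) W x ∩ τT ℓ m e ⁻¹' {y}).ncard <
      (HW (GT ℓ m) W x ∩ τT ℓ m e ⁻¹' {CandT.c}).ncard


deriving instance Fintype for VT

/-- Vertices "at or before" `z` in the tree (towards `z*_1`). -/
def belowT {ℓ m : ℕ} : VT ℓ m → Set (VT ℓ m)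
  | .zs t => {z | ∃ t' : Fin (m + 1 - ℓ), (t' : ℕ) ≤ (t : ℕ) ∧ z = .zs t'}
  | .zh j => {z | (∃ t, z = .zs t) ∨ (∃ j' : Fin 2, (j' : ℕ) ≤ (j : ℕ) ∧ z = .zh j')}
  | .v i j => {z | (∃ t, z = .zs t) ∨ (∃ j' : Fin 3, (j' : ℕ) ≤ (j : ℕ) ∧ z = .v i j')}
  | .u i k => {z | (∃ t, z = .zs t) ∨ (∃ j, z = .v i j) ∨ (∃ k' : Fin (3 * ℓ), (k' : ℕ) ≤ (k : ℕ) ∧ z = .u i k')}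
  | .w i => {z | (∃ t, z = .zs t) ∨ (∃ j, z = .v i j) ∨ (∃ k, z = .u i k)}

lemma below_subset {ℓ m : ℕ} (W : Set (VT ℓ m)) (h0 : 0 < m + 1 - ℓ)
    {z : VT ℓ m} (hz : z ∈ HW (GT ℓ m) W (xT ℓ m h0)) :
    belowT z ⊆ HW (GT ℓ m) W (xT ℓ m h0) := by
  induction hz with
  | refl =>
    intro z hz
    simp only [xT, belowT, Set.mem_setOf_eq] at hz
    obtain ⟨t', ht', rfl⟩ := hz
    have : t' = (⟨0, h0⟩ : Fin (m+1-ℓ)) := by ext; simpa using ht'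
    subst this
    exact Relation.ReflTransGen.refl
  | tail hxa hab ih =>
    rename_i a b
    have hb : b ∈ HW (GT ℓ m) W (xT ℓ m h0) := Relation.ReflTransGen.tail hxa hab
    have hadj := hab.1
    rw [GT, SimpleGraph.fromRel_adj] at hadj
    obtain ⟨-, hrel⟩ := hadj
    cases a <;> cases b <;> simp only [baseRelT, or_false, false_or, or_self] at hrel
    -- (v, v)
    · rename_i i j i' j'
      intro z hz
      simp only [belowT, Set.mem_setOf_eq] at hz
      rcases hrel with ⟨rfl, hj⟩ | ⟨rfl, hj⟩
      · rcases hz with ⟨t, rfl⟩ | ⟨j'', hj'', rfl⟩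
        · exact ih (Or.inl ⟨t, rfl⟩)
        · rcases le_or_gt (j'' : ℕ) (j : ℕ) with h | h
          · exact ih (Or.inr ⟨j'', h, rfl⟩)
          · have : j'' = j' := by ext; omega
            subst this; exact hb
      · rcases hz with ⟨t, rfl⟩ | ⟨j'', hj'', rfl⟩
        · exact ih (Or.inl ⟨t, rfl⟩)
        · exact ih (Or.inr ⟨j'', by omega, rfl⟩)
    -- (v, u)
    · rename_i i j i' k
      obtain ⟨rfl, hj, hk⟩ := hrel
      intro z hz
      simp only [belowT, Set.mem_setOf_eq] at hz
      rcases hz with ⟨t, rfl⟩ | ⟨j', rfl⟩ | ⟨k', hk', rfl⟩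
      · exact ih (Or.inl ⟨t, rfl⟩)
      · exact ih (Or.inr ⟨j', by omega, rfl⟩)
      · have : k' = k := by ext; omega
        subst this; exact hb
    -- (v, zs)
    · rename_i i j t
      intro z hz
      simp only [belowT, Set.mem_setOf_eq] at hz
      obtain ⟨t', ht', rfl⟩ := hz
      exact ih (Or.inl ⟨t', rfl⟩)
    -- (u, v)
    · rename_i i k i' j
      obtain ⟨rfl, hj, hk⟩ := hrel
      intro z hz
      simp only [belowT, Set.mem_setOf_eq] at hz
      rcases hz with ⟨t, rfl⟩ | ⟨j', hj', rfl⟩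
      · exact ih (Or.inl ⟨t, rfl⟩)
      · exact ih (Or.inr (Or.inl ⟨j', rfl⟩))
    -- (u, u)
    · rename_i i k i' k'
      intro z hz
      simp only [belowT, Set.mem_setOf_eq] at hz
      rcases hrel with ⟨rfl, hk⟩ | ⟨rfl, hk⟩
      · rcases hz with ⟨t, rfl⟩ | ⟨j, rfl⟩ | ⟨k'', hk'', rfl⟩
        · exact ih (Or.inl ⟨t, rfl⟩)
        · exact ih (Or.inr (Or.inl ⟨j, rfl⟩))
        · rcases le_or_gt (k'' : ℕ) (k : ℕ) with h | h
          · exact ih (Or.inr (Or.inr ⟨k'', h, rfl⟩))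
          · have : k'' = k' := by ext; omega
            subst this; exact hb
      · rcases hz with ⟨t, rfl⟩ | ⟨j, rfl⟩ | ⟨k'', hk'', rfl⟩
        · exact ih (Or.inl ⟨t, rfl⟩)
        · exact ih (Or.inr (Or.inl ⟨j, rfl⟩))
        · exact ih (Or.inr (Or.inr ⟨k'', by omega, rfl⟩))
    -- (u, w)
    · rename_i i k i'
      obtain ⟨rfl, hk⟩ := hrel
      intro z hz
      simp only [belowT, Set.mem_setOf_eq] at hz
      rcases hz with ⟨t, rfl⟩ | ⟨j, rfl⟩ | ⟨k'', rfl⟩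
      · exact ih (Or.inl ⟨t, rfl⟩)
      · exact ih (Or.inr (Or.inl ⟨j, rfl⟩))
      · exact ih (Or.inr (Or.inr ⟨k'', by omega, rfl⟩))
    -- (w, u)
    · rename_i i i' k
      obtain ⟨rfl, hk⟩ := hrel
      intro z hz
      simp only [belowT, Set.mem_setOf_eq] at hz
      rcases hz with ⟨t, rfl⟩ | ⟨j, rfl⟩ | ⟨k'', hk'', rfl⟩
      · exact ih (Or.inl ⟨t, rfl⟩)
      · exact ih (Or.inr (Or.inl ⟨j, rfl⟩))
      · exact ih (Or.inr (Or.inr ⟨k'', rfl⟩))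
    -- (zh, zh)
    · rename_i j j'
      intro z hz
      simp only [belowT, Set.mem_setOf_eq] at hz
      rcases hrel with hj | hj
      · rcases hz with ⟨t, rfl⟩ | ⟨j'', hj'', rfl⟩
        · exact ih (Or.inl ⟨t, rfl⟩)
        · rcases le_or_gt (j'' : ℕ) (j : ℕ) with h | h
          · exact ih (Or.inr ⟨j'', h, rfl⟩)
          · have : j'' = j' := by ext; omega
            subst this; exact hb
      · rcases hz with ⟨t, rfl⟩ | ⟨j'', hj'', rfl⟩
        · exact ih (Or.inl ⟨t, rfl⟩)
        · exact ih (Or.inr ⟨j'', by omega, rfl⟩)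
    -- (zh, zs)
    · rename_i j t
      intro z hz
      simp only [belowT, Set.mem_setOf_eq] at hz
      obtain ⟨t', ht', rfl⟩ := hz
      exact ih (Or.inl ⟨t', rfl⟩)
    -- (zs, v)
    · rename_i t i j
      obtain ⟨ht, hj⟩ := hrel
      intro z hz
      simp only [belowT, Set.mem_setOf_eq] at hz
      rcases hz with ⟨t', rfl⟩ | ⟨j', hj', rfl⟩
      · exact ih ⟨t', by omega, rfl⟩
      · have : j' = j := by ext; omega
        subst this; exact hb
    -- (zs, zh)
    · rename_i t j
      obtain ⟨ht, hj⟩ := hrel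
      intro z hz
      simp only [belowT, Set.mem_setOf_eq] at hz
      rcases hz with ⟨t', rfl⟩ | ⟨j', hj', rfl⟩
      · exact ih ⟨t', by omega, rfl⟩
      · have : j' = j := by ext; omega
        subst this; exact hb
    -- (zs, zs)
    · rename_i t t'
      intro z hz
      simp only [belowT, Set.mem_setOf_eq] at hz
      obtain ⟨t'', ht'', rfl⟩ := hz
      rcases hrel with ht | ht
      · rcases le_or_gt (t'' : ℕ) (t : ℕ) with h | h
        · exact ih ⟨t'', h, rfl⟩
        · have : t'' = t' := by ext; omega
          subst this; exact hb
      · exact ih ⟨t'', by omega, rfl⟩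
/-- If some deletion set `W ⊆ V \ {z*_1}` makes candidate `c` uniquely win, then there is
an exact cover: `A ⊆ [m]` with `|A| = ℓ` and `⋃_{i ∈ A} S_i = {1, …, 3ℓ}`. -/
theorem tree_wins_implies_exact_cover (ℓ m : ℕ) (hℓ : 1 ≤ ℓ) (hm : ℓ ≤ m)
    (e : Fin m → Fin 3 → Fin (3 * ℓ))
    (hinj : ∀ i, Function.Injective (e i))
    (hcov : Finset.univ.biUnion (SetT ℓ m e) = Finset.univ)
    (htwo : ∀ k : Fin (3 * ℓ),
      (Finset.univ.filter fun i => k ∈ SetT ℓ m e i).card = 2)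
    (hex : ∃ W : Set (VT ℓ m), xT ℓ m (by omega) ∉ W ∧
      winsT ℓ m e (xT ℓ m (by omega)) W) :
    ∃ A : Finset (Fin m), A.card = ℓ ∧ A.biUnion (SetT ℓ m e) = Finset.univ := by

  classical
  have h0 : 0 < m + 1 - ℓ := by omega
  obtain ⟨W, hxW, hwin⟩ := hex
  set x : VT ℓ m := xT ℓ m (by omega : 0 < m + 1 - ℓ) with hxdef
  set H : Set (VT ℓ m) := HW (GT ℓ m) W x with hHdef
  have hxH : x ∈ H := Relation.ReflTransGen.refl
  have hbel : ∀ {z : VT ℓ m}, z ∈ H → belowT z ⊆ H := fun hz => below_subset W _ hz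
  -- d gets at least one vote (from x)
  have hd1 : 0 < (H ∩ τT ℓ m e ⁻¹' {CandT.d}).ncard := by
    rw [Set.ncard_pos (Set.toFinite _)]
    exact ⟨x, hxH, by simp [hxdef, xT, τT]⟩
  have hdc := hwin CandT.d (by simp)
  rw [← hHdef] at hdc
  -- some c-voter is reachable, hence the whole path P* is in H
  have hzs : ∀ t, VT.zs t ∈ H := by
    have hcne : (H ∩ τT ℓ m e ⁻¹' {CandT.c}).Nonempty :=
      Set.nonempty_of_ncard_ne_zero (by omega)
    obtain ⟨z, hzH, hzc⟩ := hcne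
    intro t
    cases z with
    | v i j => simp [τT] at hzc
    | u i k => simp [τT] at hzc
    | w i => exact hbel hzH (Or.inl ⟨t, rfl⟩)
    | zh j => exact hbel hzH (Or.inl ⟨t, rfl⟩)
    | zs t' => simp [τT] at hzc
  -- the d-voters in H are exactly the zs vertices
  have hdset : H ∩ τT ℓ m e ⁻¹' {CandT.d} = Set.range (VT.zs : Fin (m+1-ℓ) → VT ℓ m) := by
    ext z
    cases z <;> simp [τT, hzs, Set.mem_range]
  have hinjzs : Function.Injective (VT.zs : Fin (m+1-ℓ) → VT ℓ m) := by
    intro a b h; injection h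
  have hdcard : (H ∩ τT ℓ m e ⁻¹' {CandT.d}).ncard = m + 1 - ℓ := by
    rw [hdset, ← Set.image_univ, Set.ncard_image_of_injective _ hinjzs, Set.ncard_univ]
    simp
  -- the set F of indices whose whole path is reachable
  set F : Finset (Fin m) := Finset.univ.filter (fun i => VT.w i ∈ H) with hFdef
  -- upper bound on c-votes
  have hcub : (H ∩ τT ℓ m e ⁻¹' {CandT.c}).ncard ≤ F.card + 2 := by
    have hsub : H ∩ τT ℓ m e ⁻¹' {CandT.c} ⊆
        ↑((F.image VT.w) ∪ {VT.zh 0, VT.zh 1} : Finset (VT ℓ m)) := by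
      rintro z ⟨hzH, hzc⟩
      cases z with
      | v i j => simp [τT] at hzc
      | u i k => simp [τT] at hzc
      | w i =>
        simp only [Finset.coe_union, Set.mem_union, Finset.coe_image, Set.mem_image]
        exact Or.inl ⟨i, by simp [hFdef, hzH], rfl⟩
      | zh j =>
        simp only [Finset.coe_union, Set.mem_union]
        right
        have : j = 0 ∨ j = 1 := by omega
        rcases this with rfl | rfl <;> simp
      | zs t => simp [τT] at hzc
    calc (H ∩ τT ℓ m e ⁻¹' {CandT.c}).ncard
        ≤ ((F.image VT.w) ∪ {VT.zh 0, VT.zh 1} : Finset (VT ℓ m)).card := by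
          rw [← Set.ncard_coe_finset]
          exact Set.ncard_le_ncard hsub (Set.toFinite _)
      _ ≤ (F.image VT.w).card + ({VT.zh 0, VT.zh 1} : Finset (VT ℓ m)).card :=
          Finset.card_union_le _ _
      _ ≤ F.card + 2 := by
          gcongr
          · exact Finset.card_image_le
          · exact (Finset.card_insert_le _ _).trans (by simp)
  have hFcard : m - ℓ ≤ F.card := by
    rw [hdcard] at hdc
    omega
  -- the complement A
  set A : Finset (Fin m) := Finset.univ.filter (fun i => VT.w i ∉ H) with hAdef
  have hAF : F.card + A.card = m := by
    rw [hFdef, hAdef]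
    simpa using Finset.card_filter_add_card_filter_not
      (s := (Finset.univ : Finset (Fin m))) (fun i => VT.w i ∈ H)
  have hAle : A.card ≤ ℓ := by omega
  -- A covers U
  have hcovA : ∀ k : Fin (3 * ℓ), ∃ i ∈ A, k ∈ SetT ℓ m e i := by
    intro k
    by_contra hno
    push_neg at hno
    have hmemF : ∀ i, k ∈ SetT ℓ m e i → i ∈ F := by
      intro i hik
      by_contra hiF
      have : i ∈ A := by
        simp only [hAdef, Finset.mem_filter, Finset.mem_univ, true_and]
        simp only [hFdef, Finset.mem_filter, Finset.mem_univ, true_and] at hiF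
        exact hiF
      exact hno i this hik
    obtain ⟨i₁, hi₁, i₂, hi₂, hne⟩ := Finset.one_lt_card.mp (by rw [htwo k]; norm_num)
    simp only [Finset.mem_filter, Finset.mem_univ, true_and] at hi₁ hi₂
    obtain ⟨j₁, -, hj₁⟩ := Finset.mem_image.mp hi₁
    obtain ⟨j₂, -, hj₂⟩ := Finset.mem_image.mp hi₂
    have hw₁ : VT.w i₁ ∈ H := by
      have := hmemF i₁ hi₁; simpa [hFdef] using this
    have hw₂ : VT.w i₂ ∈ H := by
      have := hmemF i₂ hi₂; simpa [hFdef] using this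
    -- lower bound set for candidate `elem k`
    set L : Finset (VT ℓ m) :=
      (F.image (fun i => VT.u i k)) ∪ {VT.v i₁ j₁, VT.v i₂ j₂} with hLdef
    have hLsub : ↑L ⊆ H ∩ τT ℓ m e ⁻¹' {CandT.elem k} := by
      intro z hz
      simp only [hLdef, Finset.coe_union, Set.mem_union, Finset.coe_image,
        Set.mem_image, Finset.mem_coe, Finset.mem_insert, Finset.mem_singleton] at hz
      rcases hz with ⟨i, hiF, rfl⟩ | (rfl | rfl)
      · have hwi : VT.w i ∈ H := by
          simp only [hFdef, Finset.mem_filter, Finset.mem_univ, true_and] at hiF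
          exact hiF
        exact ⟨hbel hwi (Or.inr (Or.inr ⟨k, rfl⟩)), by simp [τT]⟩
      · exact ⟨hbel hw₁ (Or.inr (Or.inl ⟨j₁, rfl⟩)), by simp [τT, hj₁]⟩
      · exact ⟨hbel hw₂ (Or.inr (Or.inl ⟨j₂, rfl⟩)), by simp [τT, hj₂]⟩
    have hLcard : L.card = F.card + 2 := by
      rw [hLdef, Finset.card_union_of_disjoint, Finset.card_image_of_injective,
        Finset.card_insert_of_notMem (by simp [hne]), Finset.card_singleton]
      · intro a b hab; injection hab
      · rw [Finset.disjoint_left]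
        rintro z hz hz'
        obtain ⟨i, -, rfl⟩ := Finset.mem_image.mp hz
        simp at hz'
    have hlb : F.card + 2 ≤ (H ∩ τT ℓ m e ⁻¹' {CandT.elem k}).ncard := by
      rw [← hLcard, ← Set.ncard_coe_finset]
      exact Set.ncard_le_ncard hLsub (Set.toFinite _)
    have := hwin (CandT.elem k) (by simp)
    rw [← hHdef] at this
    omega
  have hbiA : A.biUnion (SetT ℓ m e) = Finset.univ := by
    apply Finset.eq_univ_of_forall
    intro k
    obtain ⟨i, hiA, hik⟩ := hcovA k
    exact Finset.mem_biUnion.mpr ⟨i, hiA, hik⟩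
  -- |A| ≥ ℓ from counting
  have hAge : ℓ ≤ A.card := by
    have h1 : (Finset.univ : Finset (Fin (3 * ℓ))).card = 3 * ℓ := by simp
    have h2 : (A.biUnion (SetT ℓ m e)).card ≤ ∑ i ∈ A, (SetT ℓ m e i).card :=
      Finset.card_biUnion_le
    have h3 : ∑ i ∈ A, (SetT ℓ m e i).card ≤ A.card * 3 := by
      calc ∑ i ∈ A, (SetT ℓ m e i).card ≤ A.card • 3 := by
            apply Finset.sum_le_card_nsmul
            intro i _
            calc (SetT ℓ m e i).card ≤ (Finset.univ : Finset (Fin 3)).card :=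
                  Finset.card_image_le
              _ = 3 := by simp
        _ = A.card * 3 := by rw [smul_eq_mul]
    rw [hbiA, h1] at h2
    omega
  exact ⟨A, le_antisymm hAle hAge, hbiA⟩
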